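/- In the minimal counterexample (G, C_0), a 4-vertex v with neighbors v1, v2, v3, v4 cannot simultaneously be incident to a (3,4,5^-)-face f1 = v3vv4 and a (3,4,3,5^+)-face f2 = v1vv2w with (b(f1) ∪ b(f2)) ∩ C_0 = ∅. -/

import Mathlib

/-!
Common definitions for formalizing "A relaxation of the Bordeaux Conjecture"
(Liu, Li, Yu).  We model a plane graph combinatorially: a simple graph together
with a set of faces (each given by its boundary cycle, a list of vertices in
cyclic order), a distinguished outer face, and, for each cycle, the sets of
vertices drawn strictly inside and strictly outside of it.

A (2,0,0)-coloring uses colors `0, 1, 2 : Fin 3`, where color `0` is the color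
of deficiency 2 (called "color 1" in the paper) and colors `1` and `2` must
induce independent sets.
-/

variable {V : Type} [Fintype V] [DecidableEq V]

/-- `l` is the list of vertices of a cycle of `G`, in cyclic order. -/
def IsCycleList (G : SimpleGraph V) (l : List V) : Prop :=
  3 ≤ l.length ∧ l.Nodup ∧ ∀ p ∈ l.zip (l.rotate 1), G.Adj p.1 p.2

/-- Two lists represent the same cyclic sequence, up to rotation and reflection. -/
def SameCycle (l l' : List V) : Prop :=
  ∃ n : ℕ, l'.rotate n = l ∨ l'.reverse.rotate n = l

/-- `u` and `v` are consecutive vertices (i.e. joined by an edge) of the cycle `l`. -/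
def CycAdj (l : List V) (u v : V) : Prop :=
  (u, v) ∈ l.zip (l.rotate 1) ∨ (v, u) ∈ l.zip (l.rotate 1)

/-- A combinatorial model of a plane graph. -/
structure PlaneGraph (V : Type) [Fintype V] [DecidableEq V] where
  /-- the underlying abstract simple graph -/
  G : SimpleGraph V
  /-- the faces, given by their boundary cycles -/
  faces : Set (List V)
  /-- the boundary cycle of the outer (unbounded) face -/
  outer : List V
  outer_mem : outer ∈ faces
  faces_cycle : ∀ l ∈ faces, IsCycleList G l
  /-- the set of vertices strictly inside a cycle -/
  inside : List V → Set V
  /-- the set of vertices strictly outside a cycle -/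
  outside : List V → Set V
  inside_outside_cover : ∀ l, IsCycleList G l → ∀ v : V,
    v ∈ inside l ∨ v ∈ outside l ∨ v ∈ l
  inside_outside_disjoint : ∀ l, Disjoint (inside l) (outside l)
  on_cycle_not_inside_outside : ∀ l, ∀ v ∈ l, v ∉ inside l ∧ v ∉ outside l
  no_edge_inside_outside : ∀ l, IsCycleList G l →
    ∀ u ∈ inside l, ∀ v ∈ outside l, ¬ G.Adj u v
  inner_face_inside_empty : ∀ l ∈ faces, ¬ SameCycle l outer → inside l = ∅
  outer_outside_empty : outside outer = ∅

namespace PlaneGraph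

/-- `l` is the boundary cycle of a face of `P` (up to rotation/reflection). -/
def IsFace (P : PlaneGraph V) (l : List V) : Prop :=
  ∃ l' ∈ P.faces, SameCycle l l'

/-- The degree of a vertex. -/
noncomputable def deg (P : PlaneGraph V) (v : V) : ℕ :=
  {u | P.G.Adj v u}.ncard

/-- A separating cycle: there are vertices strictly inside and strictly outside. -/
def Separating (P : PlaneGraph V) (l : List V) : Prop :=
  IsCycleList P.G l ∧ (P.inside l).Nonempty ∧ (P.outside l).Nonempty

end PlaneGraph

/-- `a`, `b`, `c` span a triangle of `G`. -/
def IsTriangle (G : SimpleGraph V) (a b c : V) : Prop :=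
  G.Adj a b ∧ G.Adj b c ∧ G.Adj c a

/-- `v` is incident to (i.e. lies on) some triangle of `G`. -/
def OnTriangle (G : SimpleGraph V) (v : V) : Prop :=
  ∃ a b : V, IsTriangle G v a b

/-- `G` contains no cycle of length 5. -/
def NoFiveCycle (G : SimpleGraph V) : Prop :=
  ∀ l : List V, IsCycleList G l → l.length ≠ 5

/-- No two distinct triangles of `G` share a vertex. -/
def NoIntersectingTriangles (G : SimpleGraph V) : Prop :=
  ∀ a b c d e f : V, IsTriangle G a b c → IsTriangle G d e f →
    (({a, b, c} : Set V) ∩ ({d, e, f} : Set V)).Nonempty →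
    ({a, b, c} : Set V) = ({d, e, f} : Set V)

/-- Membership in the family `𝒢` of plane graphs with no 5-cycles and no
two triangles sharing a vertex. -/
def PlaneGraph.InFamilyG (P : PlaneGraph V) : Prop :=
  NoFiveCycle P.G ∧ NoIntersectingTriangles P.G

/-- A (2,0,0)-coloring of `G`: color `0` induces a subgraph of maximum degree
at most `2`, and colors `1` and `2` induce independent sets. -/
def IsCol200 (G : SimpleGraph V) (c : V → Fin 3) : Prop :=
  (∀ u v : V, G.Adj u v → c u ≠ 0 → c u ≠ c v) ∧
  (∀ v : V, c v = 0 → {u | G.Adj v u ∧ c u = 0}.ncard ≤ 2)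

/-- A (2,0,0)-coloring of the cycle `l`, viewed as a subgraph. -/
def IsCol200Cycle (l : List V) (c : V → Fin 3) : Prop :=
  (∀ u v : V, CycAdj l u v → c u ≠ 0 → c u ≠ c v) ∧
  (∀ v ∈ l, c v = 0 → {u | CycAdj l u v ∧ c u = 0}.ncard ≤ 2)

/-- `c` agrees with `c₀` on the cycle `l` and every vertex off `l` receives a
color different from those of all of its neighbors on `l`. -/
def SuperextendsOn (G : SimpleGraph V) (l : List V) (c₀ c : V → Fin 3) : Prop :=
  (∀ v ∈ l, c v = c₀ v) ∧ ∀ v : V, v ∉ l → ∀ u ∈ l, G.Adj v u → c v ≠ c u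

/-- `(G, l)` is superextendable: every (2,0,0)-coloring of the cycle `l` extends to
a (2,0,0)-coloring of `G` in which every vertex off `l` gets a color different from
those of all of its neighbors on `l`. -/
def Superextendable (G : SimpleGraph V) (l : List V) : Prop :=
  ∀ c₀ : V → Fin 3, IsCol200Cycle l c₀ →
    ∃ c : V → Fin 3, IsCol200 G c ∧ SuperextendsOn G l c₀ c

/-- `σ(G) = |V(G)| + |E(G)|`. -/
noncomputable def PlaneGraph.sigma (P : PlaneGraph V) : ℕ :=
  Fintype.card V + P.G.edgeSet.ncard

/-- `(P, C₀)` is a counterexample to the main theorem that minimizes `σ`: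
`P` is a plane graph in `𝒢`, `C₀` is a triangle or a 7-cycle of `P`,
`(P, C₀)` is not superextendable, and every pair `(P', C')` of this kind with
smaller `σ` is superextendable. -/
def IsMinCex (P : PlaneGraph V) (C₀ : List V) : Prop :=
  P.InFamilyG ∧ IsCycleList P.G C₀ ∧ (C₀.length = 3 ∨ C₀.length = 7) ∧
  ¬ Superextendable P.G C₀ ∧
  ∀ (n : ℕ) (P' : PlaneGraph (Fin n)) (C' : List (Fin n)),
    P'.InFamilyG → IsCycleList P'.G C' → (C'.length = 3 ∨ C'.length = 7) →
    P'.sigma < P.sigma → Superextendable P'.G C'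

/-- The graph obtained from `G` by identifying the vertices `u` and `w` (the merged
vertex is `u`; the vertex `w` becomes isolated). -/
def identify (G : SimpleGraph V) (u w : V) : SimpleGraph V where
  Adj x y := x ≠ y ∧ x ≠ w ∧ y ≠ w ∧
    (G.Adj x y ∨ (x = u ∧ G.Adj w y) ∨ (y = u ∧ G.Adj x w))
  symm := ⟨by
    rintro x y ⟨hxy, hxw, hyw, h⟩
    refine ⟨hxy.symm, hyw, hxw, ?_⟩
    rcases h with h | ⟨hx, h⟩ | ⟨hy, h⟩
    · exact Or.inl h.symm
    · exact Or.inr (Or.inr ⟨hx, h.symm⟩)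
    · exact Or.inr (Or.inl ⟨hy, h.symm⟩)⟩
  loopless := ⟨by
    rintro x ⟨hxx, -⟩
    exact hxx rfl⟩

/-- The graph obtained from `G` by deleting the vertices of `S`
(the deleted vertices become isolated). -/
def delVerts (G : SimpleGraph V) (S : Set V) : SimpleGraph V where
  Adj x y := G.Adj x y ∧ x ∉ S ∧ y ∉ S
  symm := ⟨fun _ _ h => ⟨h.1.symm, h.2.2, h.2.1⟩⟩
  loopless := ⟨fun x h => G.loopless.irrefl x h.1⟩

/-- Base special 3-faces: `(3,3,5⁻)`-faces and `(3,4,4)`-faces disjoint from `C₀`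
(the first listed vertex is a 3-vertex). -/
def IsBaseSpecial (P : PlaneGraph V) (C₀ : List V) (u v w : V) : Prop :=
  P.IsFace [u, v, w] ∧ u ∉ C₀ ∧ v ∉ C₀ ∧ w ∉ C₀ ∧ P.deg u = 3 ∧
    ((P.deg v = 3 ∧ P.deg w ≤ 5) ∨ (P.deg v = 4 ∧ P.deg w = 4))

/-- Special 3-faces of rank at most `n`, following the paper's recursive
definition: the base special faces are the `(3,3,5⁻)`- and `(3,4,4)`-faces
disjoint from `C₀`; a `(3,5,5)`-face `uvw` (disjoint from `C₀`, with `d(u)=3`)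
is special of rank `n+1` when each off-face neighbor of each of its two
5-vertices is a 3-vertex lying on a pendant special 3-face of rank at most `n`,
i.e. the two 5-vertices have six pendant special 3-faces altogether. -/
def SpecialRank (P : PlaneGraph V) (C₀ : List V) : ℕ → V → V → V → Prop
  | 0 => fun u v w => IsBaseSpecial P C₀ u v w
  | n + 1 => fun u v w =>
      SpecialRank P C₀ n u v w ∨
      (P.IsFace [u, v, w] ∧ u ∉ C₀ ∧ v ∉ C₀ ∧ w ∉ C₀ ∧
        P.deg u = 3 ∧ P.deg v = 5 ∧ P.deg w = 5 ∧
        (∀ x : V, P.G.Adj v x → x ≠ u → x ≠ w →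
          ∃ a b c : V, SpecialRank P C₀ n a b c ∧ v ≠ a ∧ v ≠ b ∧ v ≠ c ∧
            (x = a ∨ x = b ∨ x = c) ∧ P.deg x = 3) ∧
        (∀ x : V, P.G.Adj w x → x ≠ u → x ≠ v →
          ∃ a b c : V, SpecialRank P C₀ n a b c ∧ w ≠ a ∧ w ≠ b ∧ w ≠ c ∧
            (x = a ∨ x = b ∨ x = c) ∧ P.deg x = 3))

/-- `uvw` is a special 3-face (of some rank). -/
def IsSpecial (P : PlaneGraph V) (C₀ : List V) (u v w : V) : Prop :=
  ∃ n : ℕ, SpecialRank P C₀ n u v w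

/-- The set `S` is the vertex set of a special 3-face. -/
def IsSpecialOn (P : PlaneGraph V) (C₀ : List V) (S : Set V) : Prop :=
  ∃ a b c : V, IsSpecial P C₀ a b c ∧ S = {a, b, c}

/-- `S` is the vertex set of a pendant special 3-face of `y`:  a special 3-face
not containing `y` one of whose 3-vertices is adjacent to `y`. -/
def PendantSpecial (P : PlaneGraph V) (C₀ : List V) (y : V) (S : Set V) : Prop :=
  IsSpecialOn P C₀ S ∧ y ∉ S ∧ ∃ x ∈ S, P.deg x = 3 ∧ P.G.Adj y x

/-- The number of pendant special 3-faces of `y`. -/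
noncomputable def pendCount (P : PlaneGraph V) (C₀ : List V) (y : V) : ℕ :=
  {S : Set V | PendantSpecial P C₀ y S}.ncard

/-! ### Auxiliary lemmas -/

section Aux

lemma getElem_idx_congr {α : Type*} (l : List α) {i j : ℕ} (h : i = j) (hi : i < l.length) :
    l[i]'hi = l[j]'(h ▸ hi) := by subst h; rfl

lemma mem_zip_rotate {α : Type*} {l : List α} {p : α × α} (hp : p ∈ l.zip (l.rotate 1)) :
    ∃ i : ℕ, ∃ h : i < l.length, p.1 = l[i]'h ∧
      p.2 = l[(i + 1) % l.length]'(Nat.mod_lt _ (Nat.lt_of_le_of_lt (Nat.zero_le i) h)) := by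
  rw [List.mem_iff_getElem] at hp
  obtain ⟨i, hi, he⟩ := hp
  have hlen : (l.zip (l.rotate 1)).length = l.length := by
    simp [List.length_zip]
  have hi' : i < l.length := hlen ▸ hi
  have hz : (l.zip (l.rotate 1))[i] = (l[i], (l.rotate 1)[i]'(by simpa using hi')) :=
    List.getElem_zip (h := hi)
  refine ⟨i, hi', ?_, ?_⟩
  · rw [← he, hz]
  · rw [← he, hz]
    exact List.getElem_rotate l 1 i (by simpa using hi')

lemma zip_rotate_mem {α : Type*} {l : List α} {i : ℕ} (h : i < l.length) :
    (l[i]'h, l[(i + 1) % l.length]'(Nat.mod_lt _ (Nat.lt_of_le_of_lt (Nat.zero_le i) h)))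
      ∈ l.zip (l.rotate 1) := by
  rw [List.mem_iff_getElem]
  refine ⟨i, by simp [List.length_zip]; omega, ?_⟩
  rw [List.getElem_zip, List.getElem_rotate]

omit [Fintype V] [DecidableEq V] in
lemma isCycleList_rotate {G : SimpleGraph V} {l : List V} (h : IsCycleList G l) (n : ℕ) :
    IsCycleList G (l.rotate n) := by
  obtain ⟨h1, h2, h3⟩ := h
  refine ⟨by simpa using h1, by simpa using h2, ?_⟩
  intro p hp
  obtain ⟨i, hi, e1, e2⟩ := mem_zip_rotate hp
  have hlen : (l.rotate n).length = l.length := List.length_rotate l n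
  have hi' : i < l.length := hlen ▸ hi
  have hL : 0 < l.length := by omega
  rw [List.getElem_rotate] at e1
  rw [List.getElem_rotate] at e2
  have hmod : ((i + 1) % (l.rotate n).length + n) % l.length
      = ((i + n) % l.length + 1) % l.length := by
    rw [hlen, Nat.mod_add_mod, Nat.mod_add_mod]
    ring_nf
  have hcast := getElem_idx_congr l hmod
    (Nat.mod_lt _ hL)
  rw [hcast] at e2
  have hadj := h3 _ (zip_rotate_mem (l := l) (i := (i + n) % l.length) (Nat.mod_lt _ hL))
  rw [e1, e2]
  exact hadj

omit [Fintype V] [DecidableEq V] in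
lemma isCycleList_reverse {G : SimpleGraph V} {l : List V} (h : IsCycleList G l) :
    IsCycleList G l.reverse := by
  obtain ⟨h1, h2, h3⟩ := h
  refine ⟨by simpa using h1, by simpa using h2, ?_⟩
  intro p hp
  obtain ⟨i, hi, e1, e2⟩ := mem_zip_rotate hp
  have hlen : l.reverse.length = l.length := List.length_reverse
  have hi' : i < l.length := hlen ▸ hi
  have hL : 0 < l.length := by omega
  rw [List.getElem_reverse] at e1
  rw [List.getElem_reverse] at e2
  have hjL : l.length - 1 - ((i + 1) % l.reverse.length) < l.length := by omega
  have hkey : (l.length - 1 - ((i + 1) % l.reverse.length) + 1) % l.length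
      = l.length - 1 - i := by
    rw [hlen]
    rcases Nat.lt_or_ge (i + 1) l.length with hlt | hge
    · have e : (i + 1) % l.length = i + 1 := Nat.mod_eq_of_lt hlt
      rw [e]
      have e2 : l.length - 1 - (i + 1) + 1 = l.length - 1 - i := by omega
      rw [e2, Nat.mod_eq_of_lt (by omega)]
    · have e : (i + 1) % l.length = 0 := by
        have e3 : i + 1 = l.length := by omega
        rw [e3, Nat.mod_self]
      rw [e]
      have e4 : l.length - 1 - 0 + 1 = l.length := by omega
      rw [e4, Nat.mod_self]
      omega
  have hadj := h3 _ (zip_rotate_mem (l := l)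
    (i := l.length - 1 - ((i + 1) % l.reverse.length)) hjL)
  have hcast := getElem_idx_congr l hkey
    (Nat.mod_lt _ hL)
  rw [hcast] at hadj
  rw [e1, e2]
  exact hadj.symm

omit [Fintype V] [DecidableEq V] in
lemma isCycleList_of_sameCycle {G : SimpleGraph V} {l l' : List V}
    (h : SameCycle l l') (h' : IsCycleList G l') : IsCycleList G l := by
  obtain ⟨n, rfl | rfl⟩ := h
  · exact isCycleList_rotate h' n
  · exact isCycleList_rotate (isCycleList_reverse h') n

lemma isFace_isCycleList {P : PlaneGraph V} {l : List V} (h : P.IsFace l) :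
    IsCycleList P.G l := by
  obtain ⟨l', hl', hs⟩ := h
  exact isCycleList_of_sameCycle hs (P.faces_cycle l' hl')

end Aux

section Transfer

variable {W : Type} [Fintype W] [DecidableEq W]

/-- Transfer of a graph along an equivalence of vertex sets. -/
def gmap (e : V ≃ W) (G : SimpleGraph V) : SimpleGraph W where
  Adj a b := G.Adj (e.symm a) (e.symm b)
  symm := ⟨fun _ _ h => h.symm⟩
  loopless := ⟨fun _ h => G.loopless.irrefl _ h⟩

omit [Fintype V] [DecidableEq V] [Fintype W] [DecidableEq W] in
lemma isCycleList_map (f : V ≃ W) {G : SimpleGraph V} {H : SimpleGraph W}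
    (h : ∀ a b, G.Adj a b → H.Adj (f a) (f b)) {l : List V}
    (hl : IsCycleList G l) : IsCycleList H (l.map f) := by
  obtain ⟨h1, h2, h3⟩ := hl
  refine ⟨by simpa using h1, h2.map f.injective, ?_⟩
  intro p hp
  rw [← List.map_rotate, List.zip_map, List.mem_map] at hp
  obtain ⟨q, hq, rfl⟩ := hp
  exact h _ _ (h3 q hq)

omit [Fintype V] [DecidableEq V] [Fintype W] [DecidableEq W] in
lemma cycAdj_map (f : V ≃ W) {l : List V} {a b : V} :
    CycAdj (l.map f) (f a) (f b) ↔ CycAdj l a b := by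
  unfold CycAdj
  rw [← List.map_rotate, List.zip_map]
  constructor
  · rintro (hm | hm) <;> rw [List.mem_map] at hm <;> obtain ⟨q, hq, hqe⟩ := hm
    · have : q = (a, b) := by
        have h1 := congrArg Prod.fst hqe
        have h2 := congrArg Prod.snd hqe
        simp only [Prod.map_fst, Prod.map_snd] at h1 h2
        exact Prod.ext (f.injective h1) (f.injective h2)
      subst this; exact Or.inl hq
    · have : q = (b, a) := by
        have h1 := congrArg Prod.fst hqe
        have h2 := congrArg Prod.snd hqe
        simp only [Prod.map_fst, Prod.map_snd] at h1 h2
        exact Prod.ext (f.injective h1) (f.injective h2)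
      subst this; exact Or.inr hq
  · rintro (hm | hm)
    · exact Or.inl (List.mem_map.mpr ⟨(a, b), hm, rfl⟩)
    · exact Or.inr (List.mem_map.mpr ⟨(b, a), hm, rfl⟩)

omit [Fintype V] [DecidableEq V] [Fintype W] [DecidableEq W] in
lemma cycAdj_map' (f : V ≃ W) {l : List V} {u v : W} :
    CycAdj (l.map f) u v ↔ CycAdj l (f.symm u) (f.symm v) := by
  conv_lhs => rw [← f.apply_symm_apply u, ← f.apply_symm_apply v]
  exact cycAdj_map f

lemma superextendable_of_map (e : V ≃ W) (D : SimpleGraph V) (l : List V)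
    (h : Superextendable (gmap e D) (l.map e)) : Superextendable D l := by
  intro c₀ hc₀
  have hc₀' : IsCol200Cycle (l.map e) (c₀ ∘ e.symm) := by
    constructor
    · intro u v huv h0
      exact hc₀.1 _ _ ((cycAdj_map' e).mp huv) h0
    · intro x hx h0
      have hset : {u | CycAdj (l.map e) u x ∧ (c₀ ∘ e.symm) u = 0}
          = e '' {u | CycAdj l u (e.symm x) ∧ c₀ u = 0} := by
        ext u
        simp only [Set.mem_setOf_eq, Set.mem_image, Function.comp_apply]
        constructor
        · intro ⟨h1, h2⟩
          exact ⟨e.symm u, ⟨(cycAdj_map' e).mp h1, h2⟩, e.apply_symm_apply u⟩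
        · rintro ⟨z, ⟨h1, h2⟩, rfl⟩
          refine ⟨?_, by simpa using h2⟩
          rw [cycAdj_map' e]
          simpa using h1
      rw [hset, Set.ncard_image_of_injective _ e.injective]
      refine hc₀.2 (e.symm x) ?_ h0
      obtain ⟨a, ha, rfl⟩ := List.mem_map.mp hx
      simpa using ha
  obtain ⟨c, hcol, hsup⟩ := h _ hc₀'
  refine ⟨c ∘ e, ⟨?_, ?_⟩, ?_, ?_⟩
  · intro u v huv h0
    refine hcol.1 (e u) (e v) ?_ h0
    show D.Adj (e.symm (e u)) (e.symm (e v))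
    simpa using huv
  · intro x h0
    have hset : {u | D.Adj x u ∧ (c ∘ e) u = 0}
        = e.symm '' {u | (gmap e D).Adj (e x) u ∧ c u = 0} := by
      ext u
      simp only [Set.mem_setOf_eq, Set.mem_image, Function.comp_apply]
      constructor
      · intro ⟨h1, h2⟩
        refine ⟨e u, ⟨?_, h2⟩, by simp⟩
        show D.Adj (e.symm (e x)) (e.symm (e u))
        simpa using h1
      · rintro ⟨z, ⟨h1, h2⟩, rfl⟩
        have h1' : D.Adj (e.symm (e x)) (e.symm z) := h1
        exact ⟨by simpa using h1', by simpa using h2⟩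
    rw [hset, Set.ncard_image_of_injective _ e.symm.injective]
    exact hcol.2 (e x) h0
  · intro x hx
    have := hsup.1 (e x) (List.mem_map_of_mem (f := e) hx)
    simpa using this
  · intro x hx u hu hadj
    refine hsup.2 (e x) ?_ (e u) (List.mem_map_of_mem (f := e) hu) ?_
    · intro hmem
      obtain ⟨a, ha, hae⟩ := List.mem_map.mp hmem
      exact hx (e.injective hae ▸ ha)
    · show D.Adj (e.symm (e x)) (e.symm (e u))
      simpa using hadj

omit [Fintype V] [DecidableEq V] [Fintype W] [DecidableEq W] in
lemma edgeSet_gmap (e : V ≃ W) (D : SimpleGraph V) :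
    (gmap e D).edgeSet = Sym2.map e '' D.edgeSet := by
  apply subset_antisymm
  · intro z hz
    induction z using Sym2.ind with
    | _ a b =>
      refine ⟨s(e.symm a, e.symm b), hz, ?_⟩
      simp [Sym2.map_pair_eq]
  · rintro z ⟨z', hz', rfl⟩
    induction z' using Sym2.ind with
    | _ x y =>
      simp only [Sym2.map_pair_eq]
      show D.Adj (e.symm (e x)) (e.symm (e y))
      simpa using hz'

/-- The key application of minimality: any strictly smaller subgraph of the
minimal counterexample in which `C₀` is still a cycle is superextendable. -/
lemma min_superextendable (P : PlaneGraph V) (C₀ : List V) (h : IsMinCex P C₀)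
    (D : SimpleGraph V) (hle : ∀ a b, D.Adj a b → P.G.Adj a b)
    (hlt : D.edgeSet ⊂ P.G.edgeSet)
    (hC : IsCycleList D C₀) : Superextendable D C₀ := by
  set n := Fintype.card V with hn
  set e := Fintype.equivFin V with he
  have hmapadj : ∀ a b : V, D.Adj a b → (gmap e D).Adj (e a) (e b) := by
    intro a b hab
    show D.Adj (e.symm (e a)) (e.symm (e b))
    simpa using hab
  let P'' : PlaneGraph (Fin n) := {
    G := gmap e D
    faces := {C₀.map e}
    outer := C₀.map e
    outer_mem := rfl
    faces_cycle := by
      rintro l rfl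
      exact isCycleList_map e hmapadj hC
    inside := fun l => {x | x ∉ l}
    outside := fun _ => ∅
    inside_outside_cover := by
      intro l _ x
      by_cases hx : x ∈ l
      · exact Or.inr (Or.inr hx)
      · exact Or.inl hx
    inside_outside_disjoint := by intro l; simp
    on_cycle_not_inside_outside := by
      intro l x hx
      exact ⟨fun hmem => hmem hx, fun hmem => hmem.elim⟩
    no_edge_inside_outside := by
      intro l _ u _ x hx
      exact absurd hx (Set.notMem_empty x)
    inner_face_inside_empty := by
      rintro l rfl hs
      exact absurd ⟨0, Or.inl (List.rotate_zero _)⟩ hs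
    outer_outside_empty := rfl }
  have memkey : ∀ (x p q r : Fin n), x ∈ ({p, q, r} : Set (Fin n)) ↔
      e.symm x ∈ ({e.symm p, e.symm q, e.symm r} : Set V) := by
    intro x p q r
    simp [Set.mem_insert_iff, Set.mem_singleton_iff, e.symm.injective.eq_iff]
  have hfam : P''.InFamilyG := by
    constructor
    · intro l hl hlen
      have hD : IsCycleList D (l.map e.symm) := isCycleList_map e.symm (fun a b hab => hab) hl
      have hG : IsCycleList P.G (l.map e.symm) := by
        obtain ⟨a1, a2, a3⟩ := hD
        exact ⟨a1, a2, fun p hp => hle _ _ (a3 p hp)⟩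
      exact h.1.1 _ hG (by simpa using hlen)
    · intro a b c d f g ht1 ht2 hint
      have ht1' : IsTriangle P.G (e.symm a) (e.symm b) (e.symm c) :=
        ⟨hle _ _ ht1.1, hle _ _ ht1.2.1, hle _ _ ht1.2.2⟩
      have ht2' : IsTriangle P.G (e.symm d) (e.symm f) (e.symm g) :=
        ⟨hle _ _ ht2.1, hle _ _ ht2.2.1, hle _ _ ht2.2.2⟩
      have hint' : (({e.symm a, e.symm b, e.symm c} : Set V) ∩
          {e.symm d, e.symm f, e.symm g}).Nonempty := by
        obtain ⟨x, hx1, hx2⟩ := hint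
        exact ⟨e.symm x, (memkey x a b c).mp hx1, (memkey x d f g).mp hx2⟩
      have heq := h.1.2 _ _ _ _ _ _ ht1' ht2' hint'
      ext x
      rw [memkey x a b c, memkey x d f g, heq]
  have hcyc'' : IsCycleList P''.G (C₀.map e) := isCycleList_map e hmapadj hC
  have hlen'' : (C₀.map e).length = 3 ∨ (C₀.map e).length = 7 := by
    simpa using h.2.2.1
  have hsigma : P''.sigma < P.sigma := by
    unfold PlaneGraph.sigma
    have h1 : Fintype.card (Fin n) = Fintype.card V := by simp [hn]
    have h2 : P''.G.edgeSet.ncard = D.edgeSet.ncard := by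
      show (gmap e D).edgeSet.ncard = D.edgeSet.ncard
      rw [edgeSet_gmap, Set.ncard_image_of_injective _ (Sym2.map.injective e.injective)]
    rw [h1, h2]
    have h3 : D.edgeSet.ncard < P.G.edgeSet.ncard :=
      Set.ncard_lt_ncard hlt (Set.toFinite _)
    omega
  have hsup := h.2.2.2.2 n P'' (C₀.map e) hfam hcyc'' hlen'' hsigma
  exact superextendable_of_map e D C₀ hsup

end Transfer

section Pick

/-- Pick a color not in `S`, preferring a nonzero color. -/
def pickC (S : Finset (Fin 3)) : Fin 3 :=
  if (1 : Fin 3) ∉ S then 1 else if (2 : Fin 3) ∉ S then 2 else 0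

lemma pickC_spec (S : Finset (Fin 3)) :
    (pickC S ≠ 0 ∧ pickC S ∉ S) ∨ (pickC S = 0 ∧ (1 : Fin 3) ∈ S ∧ (2 : Fin 3) ∈ S) := by
  unfold pickC
  by_cases h1 : (1 : Fin 3) ∉ S
  · rw [if_pos h1]
    exact Or.inl ⟨by decide, h1⟩
  · rw [if_neg h1]
    by_cases h2 : (2 : Fin 3) ∉ S
    · rw [if_pos h2]
      exact Or.inl ⟨by decide, h2⟩
    · rw [if_neg h2]
      exact Or.inr ⟨rfl, not_not.mp h1, not_not.mp h2⟩

lemma pickC_notmem {S : Finset (Fin 3)} (hS : S.card ≤ 2) : pickC S ∉ S := by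
  rcases pickC_spec S with ⟨-, h⟩ | ⟨h0, h1, h2⟩
  · exact h
  · rw [h0]
    intro h0m
    have hsub : ({0, 1, 2} : Finset (Fin 3)) ⊆ S := by
      intro x hx
      fin_cases hx <;> assumption
    have := Finset.card_le_card hsub
    simp at this
    omega

lemma pickC_nonzero_notmem {S : Finset (Fin 3)} (h : pickC S ≠ 0) : pickC S ∉ S := by
  rcases pickC_spec S with ⟨-, hm⟩ | ⟨h0, -⟩
  · exact hm
  · exact absurd h0 h

lemma pickC_zero {S : Finset (Fin 3)} (h : pickC S = 0) :
    (1 : Fin 3) ∈ S ∧ (2 : Fin 3) ∈ S := by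
  rcases pickC_spec S with ⟨h0, -⟩ | ⟨-, h1, h2⟩
  · exact absurd h h0
  · exact ⟨h1, h2⟩

end Pick

/-- In the minimal counterexample `(G, C₀)` (with `C₀` bounding the
outer face), a 4-vertex `v` with neighbors `v₁, v₂, v₃, v₄` cannot simultaneously
be incident to a `(3,4,5⁻)`-face `f₁ = v₃vv₄` and a `(3,4,3,5⁺)`-face
`f₂ = v₁vv₂w` with `(b(f₁) ∪ b(f₂)) ∩ C₀ = ∅`. -/
theorem mincex_no_four_vertex_with_two_bad_faces
    (P : PlaneGraph V) (C₀ : List V) (h : IsMinCex P C₀)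
    (houter : SameCycle C₀ P.outer)
    (v v₁ v₂ v₃ v₄ w : V)
    (hdeg : P.deg v = 4)
    (hadj : P.G.Adj v v₁ ∧ P.G.Adj v v₂ ∧ P.G.Adj v v₃ ∧ P.G.Adj v v₄)
    (hnodup : [v₁, v₂, v₃, v₄].Nodup)
    (hf1 : P.IsFace [v₃, v, v₄]) (hd3 : P.deg v₃ = 3) (hd4 : P.deg v₄ ≤ 5)
    (hf2 : P.IsFace [v₁, v, v₂, w]) (hd1 : P.deg v₁ = 3) (hd2 : P.deg v₂ = 3)
    (hdw : 5 ≤ P.deg w)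
    (hC : v ∉ C₀ ∧ v₁ ∉ C₀ ∧ v₂ ∉ C₀ ∧ v₃ ∉ C₀ ∧ v₄ ∉ C₀ ∧ w ∉ C₀) :
    False := by
  classical
  obtain ⟨hav1, hav2, hav3, hav4⟩ := hadj
  obtain ⟨hvC, hv1C, hv2C, hv3C, hv4C, hwC⟩ := hC
  -- pairwise distinctness
  have h12 : v₁ ≠ v₂ := by intro e; subst e; simp at hnodup
  have h13 : v₁ ≠ v₃ := by intro e; subst e; simp at hnodup
  have h14 : v₁ ≠ v₄ := by intro e; subst e; simp at hnodup
  have h23 : v₂ ≠ v₃ := by intro e; subst e; simp at hnodup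
  have h24 : v₂ ≠ v₄ := by intro e; subst e; simp at hnodup
  have h34 : v₃ ≠ v₄ := by intro e; subst e; simp at hnodup
  -- the triangle v₃ v v₄
  have hcyc1 : IsCycleList P.G [v₃, v, v₄] := isFace_isCycleList hf1
  have hadj43 : P.G.Adj v₄ v₃ := by
    apply hcyc1.2.2 (v₄, v₃)
    simp [List.rotate_cons_succ]
  have htri : IsTriangle P.G v v₃ v₄ := ⟨hav3, hadj43.symm, hav4.symm⟩
  have hnadj : ∀ a b : V, P.G.Adj v a → P.G.Adj v b → P.G.Adj a b →
      ({v, a, b} : Set V) = {v, v₃, v₄} := by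
    intro a b h1 h2 h3
    exact h.1.2 v a b v v₃ v₄ ⟨h1, h3, h2.symm⟩ htri ⟨v, by simp, by simp⟩
  have hna12 : ¬ P.G.Adj v₁ v₂ := by
    intro hadj'
    have hset := hnadj v₁ v₂ hav1 hav2 hadj'
    have hm : v₁ ∈ ({v, v₃, v₄} : Set V) := by
      rw [← hset]; simp
    simp only [Set.mem_insert_iff, Set.mem_singleton_iff] at hm
    rcases hm with e | e | e
    · exact hav1.ne' e
    · exact h13 e
    · exact h14 e
  have hna13 : ¬ P.G.Adj v₁ v₃ := by
    intro hadj'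
    have hset := hnadj v₁ v₃ hav1 hav3 hadj'
    have hm : v₁ ∈ ({v, v₃, v₄} : Set V) := by
      rw [← hset]; simp
    simp only [Set.mem_insert_iff, Set.mem_singleton_iff] at hm
    rcases hm with e | e | e
    · exact hav1.ne' e
    · exact h13 e
    · exact h14 e
  have hna14 : ¬ P.G.Adj v₁ v₄ := by
    intro hadj'
    have hset := hnadj v₁ v₄ hav1 hav4 hadj'
    have hm : v₁ ∈ ({v, v₃, v₄} : Set V) := by
      rw [← hset]; simp
    simp only [Set.mem_insert_iff, Set.mem_singleton_iff] at hm
    rcases hm with e | e | e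
    · exact hav1.ne' e
    · exact h13 e
    · exact h14 e
  have hna23 : ¬ P.G.Adj v₂ v₃ := by
    intro hadj'
    have hset := hnadj v₂ v₃ hav2 hav3 hadj'
    have hm : v₂ ∈ ({v, v₃, v₄} : Set V) := by
      rw [← hset]; simp
    simp only [Set.mem_insert_iff, Set.mem_singleton_iff] at hm
    rcases hm with e | e | e
    · exact hav2.ne' e
    · exact h23 e
    · exact h24 e
  have hna24 : ¬ P.G.Adj v₂ v₄ := by
    intro hadj'
    have hset := hnadj v₂ v₄ hav2 hav4 hadj'
    have hm : v₂ ∈ ({v, v₃, v₄} : Set V) := by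
      rw [← hset]; simp
    simp only [Set.mem_insert_iff, Set.mem_singleton_iff] at hm
    rcases hm with e | e | e
    · exact hav2.ne' e
    · exact h23 e
    · exact h24 e
  -- the neighborhood of v
  have hNv : ({v₁, v₂, v₃, v₄} : Set V) = {u | P.G.Adj v u} := by
    apply Set.eq_of_subset_of_ncard_le
    · intro x hx
      simp only [Set.mem_insert_iff, Set.mem_singleton_iff] at hx
      rcases hx with rfl | rfl | rfl | rfl
      · exact hav1
      · exact hav2
      · exact hav3
      · exact hav4
    · have hc4 : ({v₁, v₂, v₃, v₄} : Set V).ncard = 4 := by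
        rw [Set.ncard_insert_of_notMem (by simp [h12, h13, h14]),
          Set.ncard_insert_of_notMem (by simp [h23, h24]),
          Set.ncard_insert_of_notMem (by simp [h34]), Set.ncard_singleton]
      rw [hc4]
      exact le_of_eq hdeg
    · exact Set.toFinite _
  have hnbr : ∀ x, P.G.Adj v x → x = v₁ ∨ x = v₂ ∨ x = v₃ ∨ x = v₄ := by
    intro x hx
    have hx' : x ∈ {u | P.G.Adj v u} := hx
    rw [← hNv] at hx'
    simpa using hx'
  -- the reduced graph
  set D := delVerts P.G {v} with hD
  have hDadj : ∀ a b, P.G.Adj a b → a ≠ v → b ≠ v → D.Adj a b := by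
    intro a b h1 h2 h3
    exact ⟨h1, by simpa using h2, by simpa using h3⟩
  have hle : ∀ a b, D.Adj a b → P.G.Adj a b := fun a b hab => hab.1
  have hltE : D.edgeSet ⊂ P.G.edgeSet := by
    rw [Set.ssubset_def]
    constructor
    · exact SimpleGraph.edgeSet_mono (fun a b hab => hab.1)
    · intro hsub
      have : D.Adj v v₁ := (SimpleGraph.mem_edgeSet D).mp (hsub ((SimpleGraph.mem_edgeSet P.G).mpr hav1))
      exact this.2.1 rfl
  have hCD : IsCycleList D C₀ := by
    obtain ⟨a1, a2, a3⟩ := h.2.1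
    refine ⟨a1, a2, ?_⟩
    intro p hp
    have hmemp := List.of_mem_zip hp
    refine hDadj _ _ (a3 p hp) ?_ ?_
    · intro e; exact hvC (e ▸ hmemp.1)
    · intro e; exact hvC (e ▸ (List.mem_rotate.mp hmemp.2))
  have hsupD := min_superextendable P C₀ h D hle hltE hCD
  -- extract a bad precoloring
  have hnsup := h.2.2.2.1
  rw [Superextendable] at hnsup
  push_neg at hnsup
  obtain ⟨c₀, hc₀, hbad⟩ := hnsup
  obtain ⟨c, hcol, hsup⟩ := hsupD c₀ hc₀
  -- neighborhood finsets
  set Nfin : V → Finset V := fun x => (Set.toFinite {u | P.G.Adj x u}).toFinset with hNfdef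
  have hNfin : ∀ x u, u ∈ Nfin x ↔ P.G.Adj x u := by
    intro x u
    simp [hNfdef, Set.Finite.mem_toFinset]
  have hNcard : ∀ x, (Nfin x).card = P.deg x := by
    intro x
    rw [PlaneGraph.deg, Set.ncard_eq_toFinset_card]
  set N1 := (Nfin v₁).erase v with hN1def
  set N2 := (Nfin v₂).erase v with hN2def
  set N3 := ((Nfin v₃).erase v).erase v₄ with hN3def
  set O := ((Nfin v₄).erase v).erase v₃ with hOdef
  have hN1card : N1.card = 2 := by
    rw [hN1def, Finset.card_erase_of_mem ((hNfin v₁ v).mpr hav1.symm), hNcard, hd1]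
  have hN2card : N2.card = 2 := by
    rw [hN2def, Finset.card_erase_of_mem ((hNfin v₂ v).mpr hav2.symm), hNcard, hd2]
  have hN3card : N3.card = 1 := by
    rw [hN3def, Finset.card_erase_of_mem
      (Finset.mem_erase.mpr ⟨hav4.ne', (hNfin v₃ v₄).mpr hadj43.symm⟩),
      Finset.card_erase_of_mem ((hNfin v₃ v).mpr hav3.symm), hNcard, hd3]
  have hOcard : O.card ≤ 3 := by
    rw [hOdef, Finset.card_erase_of_mem
      (Finset.mem_erase.mpr ⟨hav3.ne', (hNfin v₄ v₃).mpr hadj43⟩),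
      Finset.card_erase_of_mem ((hNfin v₄ v).mpr hav4.symm), hNcard]
    omega
  -- the new colors
  set d₄ : Fin 3 := if c v₄ ≠ 0 then c v₄ else pickC (O.image c) with hd₄def
  set a₃ : Fin 3 := pickC (insert d₄ (N3.image c)) with ha₃def
  set a₁ : Fin 3 := pickC (N1.image c) with ha₁def
  set a₂ : Fin 3 := pickC (N2.image c) with ha₂def
  set CS : Finset (Fin 3) := insert a₁ (insert a₂ (insert a₃ {d₄})) with hCSdef
  set cv : Fin 3 := pickC CS with hcvdef
  have ha₁mem : a₁ ∉ N1.image c := by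
    rw [ha₁def]
    exact pickC_notmem (le_trans Finset.card_image_le (le_of_eq hN1card))
  have ha₂mem : a₂ ∉ N2.image c := by
    rw [ha₂def]
    exact pickC_notmem (le_trans Finset.card_image_le (le_of_eq hN2card))
  have ha₃mem : a₃ ∉ insert d₄ (N3.image c) := by
    rw [ha₃def]
    refine pickC_notmem ?_
    calc (insert d₄ (N3.image c)).card ≤ (N3.image c).card + 1 := Finset.card_insert_le _ _
      _ ≤ N3.card + 1 := by have := Finset.card_image_le (f := c) (s := N3); omega
      _ ≤ 2 := by omega
  have ha₃d₄ : a₃ ≠ d₄ := fun e => ha₃mem (Finset.mem_insert.mpr (Or.inl e))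
  have ha₃N3 : ∀ u ∈ N3, a₃ ≠ c u := by
    intro u hu e
    exact ha₃mem (Finset.mem_insert.mpr (Or.inr (e ▸ Finset.mem_image_of_mem c hu)))
  -- the new coloring
  set c' : V → Fin 3 := fun x =>
    if x = v then cv else if x = v₁ then a₁ else if x = v₂ then a₂ else
      if x = v₃ then a₃ else if x = v₄ then d₄ else c x with hc'def
  have hc'v : c' v = cv := by simp [hc'def]
  have hc'1 : c' v₁ = a₁ := by simp [hc'def, hav1.ne']
  have hc'2 : c' v₂ = a₂ := by simp [hc'def, hav2.ne', h12.symm]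
  have hc'3 : c' v₃ = a₃ := by simp [hc'def, hav3.ne', h13.symm, h23.symm]
  have hc'4 : c' v₄ = d₄ := by simp [hc'def, hav4.ne', h14.symm, h24.symm, h34.symm]
  have hc'out : ∀ x, x ≠ v → x ≠ v₁ → x ≠ v₂ → x ≠ v₃ → x ≠ v₄ → c' x = c x := by
    intro x e0 e1 e2 e3 e4
    simp [hc'def, e0, e1, e2, e3, e4]
  -- invariant I1
  have hI1 : ∀ u, P.G.Adj v₁ u → u ≠ v → a₁ ≠ c' u := by
    intro u hu hunv
    have humem : u ∈ N1 := Finset.mem_erase.mpr ⟨hunv, (hNfin v₁ u).mpr hu⟩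
    rw [hc'out u hunv hu.ne' (fun e => hna12 (e ▸ hu)) (fun e => hna13 (e ▸ hu))
      (fun e => hna14 (e ▸ hu))]
    intro e
    exact ha₁mem (e ▸ Finset.mem_image_of_mem c humem)
  have hI2 : ∀ u, P.G.Adj v₂ u → u ≠ v → a₂ ≠ c' u := by
    intro u hu hunv
    have humem : u ∈ N2 := Finset.mem_erase.mpr ⟨hunv, (hNfin v₂ u).mpr hu⟩
    rw [hc'out u hunv (fun e => hna12 (e ▸ hu).symm) hu.ne' (fun e => hna23 (e ▸ hu))
      (fun e => hna24 (e ▸ hu))]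
    intro e
    exact ha₂mem (e ▸ Finset.mem_image_of_mem c humem)
  have hI3 : ∀ u, P.G.Adj v₃ u → u ≠ v → a₃ ≠ c' u := by
    intro u hu hunv
    by_cases h4 : u = v₄
    · subst h4
      rw [hc'4]
      exact ha₃d₄
    · have humem : u ∈ N3 :=
        Finset.mem_erase.mpr ⟨h4, Finset.mem_erase.mpr ⟨hunv, (hNfin v₃ u).mpr hu⟩⟩
      rw [hc'out u hunv (fun e => hna13 (e ▸ hu).symm) (fun e => hna23 (e ▸ hu).symm)
        hu.ne' h4]
      exact ha₃N3 u humem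
  -- invariant for d₄
  have hI4 : d₄ = c v₄ ∨ (d₄ ≠ 0 ∧ ∀ u, P.G.Adj v₄ u → u ≠ v → d₄ ≠ c' u) := by
    by_cases h40 : c v₄ ≠ 0
    · left; rw [hd₄def, if_pos h40]
    · have hd₄eq : d₄ = pickC (O.image c) := by rw [hd₄def, if_neg h40]
      rcases pickC_spec (O.image c) with ⟨hnz, hnm⟩ | ⟨hz, -⟩
      · right
        refine ⟨hd₄eq ▸ hnz, ?_⟩
        intro u hu hunv
        by_cases h3 : u = v₃
        · subst h3
          rw [hc'3]
          exact ha₃d₄.symm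
        · have humem : u ∈ O :=
            Finset.mem_erase.mpr ⟨h3, Finset.mem_erase.mpr ⟨hunv, (hNfin v₄ u).mpr hu⟩⟩
          rw [hc'out u hunv (fun e => hna14 (e ▸ hu).symm) (fun e => hna24 (e ▸ hu).symm)
            h3 hu.ne']
          intro e
          rw [hd₄eq] at e
          exact hnm (e ▸ Finset.mem_image_of_mem c humem)
      · left
        rw [hd₄eq, hz]
        exact (not_not.mp h40).symm
  have hI4z : d₄ = 0 → d₄ = c v₄ ∧ a₃ ≠ 0 ∧ (O.filter (fun u => c u = 0)).card ≤ 1 := by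
    intro h0
    have h40 : c v₄ = 0 := by
      by_contra h40
      rw [hd₄def, if_pos h40] at h0
      exact h40 h0
    have hd₄eq : d₄ = pickC (O.image c) := by
      rw [hd₄def, if_neg (not_not.mpr h40)]
    have hz := pickC_zero (hd₄eq ▸ h0)
    obtain ⟨o₁, ho₁O, ho₁c⟩ := Finset.mem_image.mp hz.1
    obtain ⟨o₂, ho₂O, ho₂c⟩ := Finset.mem_image.mp hz.2
    have hone : o₁ ≠ o₂ := by
      intro e
      rw [e, ho₂c] at ho₁c
      exact absurd ho₁c (by decide)
    refine ⟨h0.trans h40.symm, fun e => ha₃d₄ (e.trans h0.symm), ?_⟩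
    have hsub : O.filter (fun u => c u = 0) ⊆ (O.erase o₁).erase o₂ := by
      intro x hx
      obtain ⟨hxO, hx0⟩ := Finset.mem_filter.mp hx
      refine Finset.mem_erase.mpr ⟨?_, Finset.mem_erase.mpr ⟨?_, hxO⟩⟩
      · intro e; rw [e, ho₂c] at hx0; exact absurd hx0 (by decide)
      · intro e; rw [e, ho₁c] at hx0; exact absurd hx0 (by decide)
    have := Finset.card_le_card hsub
    rw [Finset.card_erase_of_mem (Finset.mem_erase.mpr ⟨hone.symm, ho₂O⟩),
      Finset.card_erase_of_mem ho₁O] at this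
    omega
  -- invariant for cv
  have hCSmem : ∀ u, P.G.Adj v u → c' u ∈ CS := by
    intro u hu
    rcases hnbr u hu with rfl | rfl | rfl | rfl
    · rw [hc'1]; exact Finset.mem_insert_self _ _
    · rw [hc'2]; exact Finset.mem_insert_of_mem (Finset.mem_insert_self _ _)
    · rw [hc'3]
      exact Finset.mem_insert_of_mem (Finset.mem_insert_of_mem (Finset.mem_insert_self _ _))
    · rw [hc'4]
      exact Finset.mem_insert_of_mem (Finset.mem_insert_of_mem
        (Finset.mem_insert_of_mem (Finset.mem_singleton_self _)))
  have hIva : cv ≠ 0 → ∀ u, P.G.Adj v u → cv ≠ c' u := by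
    intro hnz u hu e
    exact (pickC_nonzero_notmem (hcvdef ▸ hnz)) (hcvdef ▸ (e ▸ hCSmem u hu))
  have hIvb : cv = 0 → {u | P.G.Adj v u ∧ c' u = 0}.ncard ≤ 2 := by
    intro h0
    have hz := pickC_zero (hcvdef ▸ h0)
    have hwit : ∀ b : Fin 3, b ∈ CS → ∃ x ∈ ({v₁, v₂, v₃, v₄} : Finset V), c' x = b := by
      intro b hb
      rw [hCSdef] at hb
      rcases Finset.mem_insert.mp hb with rfl | hb
      · exact ⟨v₁, by simp, hc'1⟩
      rcases Finset.mem_insert.mp hb with rfl | hb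
      · exact ⟨v₂, by simp, hc'2⟩
      rcases Finset.mem_insert.mp hb with rfl | hb
      · exact ⟨v₃, by simp, hc'3⟩
      rw [Finset.mem_singleton.mp hb]
      exact ⟨v₄, by simp, hc'4⟩
    obtain ⟨x₁, hx₁m, hx₁c⟩ := hwit 1 hz.1
    obtain ⟨x₂, hx₂m, hx₂c⟩ := hwit 2 hz.2
    have hxne : x₁ ≠ x₂ := by
      intro e; rw [e, hx₂c] at hx₁c; exact absurd hx₁c (by decide)
    have hsub : {u | P.G.Adj v u ∧ c' u = 0} ⊆
        ↑((({v₁, v₂, v₃, v₄} : Finset V).erase x₁).erase x₂) := by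
      intro x ⟨hx1, hx2⟩
      have hxm : x ∈ ({v₁, v₂, v₃, v₄} : Finset V) := by
        rcases hnbr x hx1 with rfl | rfl | rfl | rfl <;> simp
      simp only [Finset.coe_erase, Set.mem_diff, Set.mem_singleton_iff, Finset.mem_coe]
      refine ⟨⟨hxm, ?_⟩, ?_⟩
      · intro e; rw [e, hx₁c] at hx2; exact absurd hx2 (by decide)
      · intro e; rw [e, hx₂c] at hx2; exact absurd hx2 (by decide)
    calc {u | P.G.Adj v u ∧ c' u = 0}.ncard
        ≤ (↑((({v₁, v₂, v₃, v₄} : Finset V).erase x₁).erase x₂) : Set V).ncard :=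
          Set.ncard_le_ncard hsub (Set.toFinite _)
      _ = ((({v₁, v₂, v₃, v₄} : Finset V).erase x₁).erase x₂).card := Set.ncard_coe_finset _
      _ ≤ 2 := by
          have hcard4 : ({v₁, v₂, v₃, v₄} : Finset V).card = 4 := by
            rw [Finset.card_insert_of_notMem (by simp [h12, h13, h14]),
              Finset.card_insert_of_notMem (by simp [h23, h24]),
              Finset.card_insert_of_notMem (by simp [h34]), Finset.card_singleton]
          have he1 := Finset.card_erase_of_mem hx₁m
          have hx₂m' : x₂ ∈ ({v₁, v₂, v₃, v₄} : Finset V).erase x₁ :=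
            Finset.mem_erase.mpr ⟨hxne.symm, hx₂m⟩
          have he2 := Finset.card_erase_of_mem hx₂m'
          omega
  -- vertices of C₀ avoid the configuration
  have hCne : ∀ u ∈ C₀, u ≠ v ∧ u ≠ v₁ ∧ u ≠ v₂ ∧ u ≠ v₃ ∧ u ≠ v₄ := by
    intro u hu
    exact ⟨fun e => hvC (e ▸ hu), fun e => hv1C (e ▸ hu), fun e => hv2C (e ▸ hu),
      fun e => hv3C (e ▸ hu), fun e => hv4C (e ▸ hu)⟩
  -- first coloring condition
  have hcond1 : ∀ x y, P.G.Adj x y → c' x ≠ 0 → c' x ≠ c' y := by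
    intro x y hxy hx0
    by_cases hxv : x = v
    · subst hxv
      rw [hc'v] at hx0 ⊢
      exact hIva hx0 y hxy
    by_cases hyv : y = v
    · subst hyv
      rw [hc'v]
      by_cases hcv0 : cv = 0
      · rw [hcv0]; exact hx0
      · intro e
        exact hIva hcv0 x hxy.symm e.symm
    by_cases hx1 : x = v₁
    · subst hx1; rw [hc'1] at hx0 ⊢; exact hI1 y hxy hyv
    by_cases hx2 : x = v₂
    · subst hx2; rw [hc'2] at hx0 ⊢; exact hI2 y hxy hyv
    by_cases hx3 : x = v₃
    · subst hx3; rw [hc'3] at hx0 ⊢; exact hI3 y hxy hyv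
    by_cases hx4 : x = v₄
    · subst hx4
      rw [hc'4] at hx0 ⊢
      rcases hI4 with hold | ⟨-, hnew⟩
      · by_cases hy3 : y = v₃
        · subst hy3; rw [hc'3]; exact ha₃d₄.symm
        · have hy1 : y ≠ v₁ := fun e => hna14 (e ▸ hxy).symm
          have hy2 : y ≠ v₂ := fun e => hna24 (e ▸ hxy).symm
          have hy4 : y ≠ x := hxy.ne'
          rw [hc'out y hyv hy1 hy2 hy3 hy4, hold]
          rw [hold] at hx0
          exact hcol.1 x y (hDadj _ _ hxy hav4.ne' hyv) hx0
      · exact hnew y hxy hyv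
    · have hc'x : c' x = c x := hc'out x hxv hx1 hx2 hx3 hx4
      rw [hc'x] at hx0 ⊢
      by_cases hy1 : y = v₁
      · subst hy1; rw [hc'1]
        exact fun e => hI1 x hxy.symm hxv (by rw [hc'x, e])
      by_cases hy2 : y = v₂
      · subst hy2; rw [hc'2]
        exact fun e => hI2 x hxy.symm hxv (by rw [hc'x, e])
      by_cases hy3 : y = v₃
      · subst hy3; rw [hc'3]
        exact fun e => hI3 x hxy.symm hxv (by rw [hc'x, e])
      by_cases hy4 : y = v₄
      · subst hy4
        rw [hc'4]
        rcases hI4 with hold | ⟨-, hnew⟩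
        · rw [hold]
          exact hcol.1 x y (hDadj _ _ hxy hxv hav4.ne') hx0
        · exact fun e => hnew x hxy.symm hxv (by rw [hc'x, e])
      · rw [hc'out y hyv hy1 hy2 hy3 hy4]
        exact hcol.1 x y (hDadj _ _ hxy hxv hyv) hx0
  -- second coloring condition
  have hcond2 : ∀ x, c' x = 0 → {u | P.G.Adj x u ∧ c' u = 0}.ncard ≤ 2 := by
    intro x hx0
    by_cases hxv : x = v
    · subst hxv; rw [hc'v] at hx0; exact hIvb hx0
    by_cases hx1 : x = v₁
    · subst hx1
      rw [hc'1] at hx0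
      have hsub : {u | P.G.Adj x u ∧ c' u = 0} ⊆ {v} := by
        rintro u ⟨hu1, hu2⟩
        by_contra hne
        exact hI1 u hu1 hne (hx0.trans hu2.symm)
      calc {u | P.G.Adj x u ∧ c' u = 0}.ncard ≤ ({v} : Set V).ncard :=
          Set.ncard_le_ncard hsub (Set.toFinite _)
        _ ≤ 2 := by rw [Set.ncard_singleton]; omega
    by_cases hx2 : x = v₂
    · subst hx2
      rw [hc'2] at hx0
      have hsub : {u | P.G.Adj x u ∧ c' u = 0} ⊆ {v} := by
        rintro u ⟨hu1, hu2⟩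
        by_contra hne
        exact hI2 u hu1 hne (hx0.trans hu2.symm)
      calc {u | P.G.Adj x u ∧ c' u = 0}.ncard ≤ ({v} : Set V).ncard :=
          Set.ncard_le_ncard hsub (Set.toFinite _)
        _ ≤ 2 := by rw [Set.ncard_singleton]; omega
    by_cases hx3 : x = v₃
    · subst hx3
      rw [hc'3] at hx0
      have hsub : {u | P.G.Adj x u ∧ c' u = 0} ⊆ {v} := by
        rintro u ⟨hu1, hu2⟩
        by_contra hne
        exact hI3 u hu1 hne (hx0.trans hu2.symm)
      calc {u | P.G.Adj x u ∧ c' u = 0}.ncard ≤ ({v} : Set V).ncard :=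
          Set.ncard_le_ncard hsub (Set.toFinite _)
        _ ≤ 2 := by rw [Set.ncard_singleton]; omega
    by_cases hx4 : x = v₄
    · subst hx4
      rw [hc'4] at hx0
      obtain ⟨hold, ha₃nz, hOz⟩ := hI4z hx0
      have hsub : {u | P.G.Adj x u ∧ c' u = 0} ⊆
          {v} ∪ ↑(O.filter (fun u => c u = 0)) := by
        rintro u ⟨hu1, hu2⟩
        by_cases huv : u = v
        · exact Or.inl huv
        · right
          have hu3 : u ≠ v₃ := by
            intro e; rw [e, hc'3] at hu2; exact ha₃nz hu2
          have hu1' : u ≠ v₁ := fun e => hna14 (e ▸ hu1).symm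
          have hu2' : u ≠ v₂ := fun e => hna24 (e ▸ hu1).symm
          have humem : u ∈ O := Finset.mem_erase.mpr
            ⟨hu3, Finset.mem_erase.mpr ⟨huv, (hNfin x u).mpr hu1⟩⟩
          have hcu : c u = 0 := by
            rw [← hc'out u huv hu1' hu2' hu3 hu1.ne']
            exact hu2
          exact Finset.mem_coe.mpr (Finset.mem_filter.mpr ⟨humem, hcu⟩)
      calc {u | P.G.Adj x u ∧ c' u = 0}.ncard
          ≤ ({v} ∪ ↑(O.filter (fun u => c u = 0)) : Set V).ncard :=
            Set.ncard_le_ncard hsub (Set.toFinite _)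
        _ ≤ ({v} : Set V).ncard + (↑(O.filter (fun u => c u = 0)) : Set V).ncard :=
            Set.ncard_union_le _ _
        _ ≤ 2 := by rw [Set.ncard_singleton, Set.ncard_coe_finset]; omega
    · have hc'x : c' x = c x := hc'out x hxv hx1 hx2 hx3 hx4
      rw [hc'x] at hx0
      have hsub : {u | P.G.Adj x u ∧ c' u = 0} ⊆ {u | D.Adj x u ∧ c u = 0} := by
        rintro u ⟨hu1, hu2⟩
        have huv : u ≠ v := by
          intro e
          subst e
          rcases hnbr x hu1.symm with rfl | rfl | rfl | rfl
          exacts [hx1 rfl, hx2 rfl, hx3 rfl, hx4 rfl]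
        refine ⟨hDadj x u hu1 hxv huv, ?_⟩
        by_cases hu1' : u = v₁
        · exfalso
          subst hu1'
          rw [hc'1] at hu2
          exact hI1 x hu1.symm hxv (by rw [hc'x, hx0, ← hu2])
        by_cases hu2' : u = v₂
        · exfalso
          subst hu2'
          rw [hc'2] at hu2
          exact hI2 x hu1.symm hxv (by rw [hc'x, hx0, ← hu2])
        by_cases hu3' : u = v₃
        · exfalso
          subst hu3'
          rw [hc'3] at hu2
          exact hI3 x hu1.symm hxv (by rw [hc'x, hx0, ← hu2])
        by_cases hu4' : u = v₄
        · subst hu4'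
          rw [hc'4] at hu2
          obtain ⟨hold, -, -⟩ := hI4z hu2
          rw [← hold]
          exact hu2
        · rw [← hc'out u huv hu1' hu2' hu3' hu4']
          exact hu2
      calc {u | P.G.Adj x u ∧ c' u = 0}.ncard ≤ {u | D.Adj x u ∧ c u = 0}.ncard :=
          Set.ncard_le_ncard hsub (Set.toFinite _)
        _ ≤ 2 := hcol.2 x hx0
  -- superextension
  have hsupG : SuperextendsOn P.G C₀ c₀ c' := by
    constructor
    · intro x hxC
      obtain ⟨e0, e1, e2, e3, e4⟩ := hCne x hxC
      rw [hc'out x e0 e1 e2 e3 e4]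
      exact hsup.1 x hxC
    · intro z hz u huC hadjzu
      obtain ⟨u0, u1, u2, u3, u4⟩ := hCne u huC
      have hc'u : c' u = c u := hc'out u u0 u1 u2 u3 u4
      by_cases hzv : z = v
      · exfalso
        subst hzv
        rcases hnbr u hadjzu with rfl | rfl | rfl | rfl
        exacts [u1 rfl, u2 rfl, u3 rfl, u4 rfl]
      by_cases hz1 : z = v₁
      · subst hz1; rw [hc'1]; exact hI1 u hadjzu u0
      by_cases hz2 : z = v₂
      · subst hz2; rw [hc'2]; exact hI2 u hadjzu u0
      by_cases hz3 : z = v₃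
      · subst hz3; rw [hc'3]; exact hI3 u hadjzu u0
      by_cases hz4 : z = v₄
      · subst hz4
        rw [hc'4]
        rcases hI4 with hold | ⟨-, hnew⟩
        · rw [hold, hc'u]
          exact hsup.2 z hv4C u huC (hDadj _ _ hadjzu hav4.ne' u0)
        · exact hnew u hadjzu u0
      · rw [hc'out z hzv hz1 hz2 hz3 hz4, hc'u]
        exact hsup.2 z hz u huC (hDadj _ _ hadjzu hzv u0)
  exact hbad c' ⟨hcond1, hcond2⟩ hsupG
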